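/- For coplanar interpolation points with common unit normal n and Gaussian radial basis functions, the rescaled interpolant is invariant under translations along n: Π̂_f(x + s n) = Π̂_f(x) for all s ∈ ℝ and all x where the denominators are nonzero. -/

import Mathlib

/-- For coplanar interpolation points with common unit normal `n` and Gaussian RBFs,
the rescaled interpolant is invariant under translations along `n`. -/
theorem stmt_2 {d M : ℕ} [NeZero M] (ξ : Fin M → EuclideanSpace ℝ (Fin d))
    (n : EuclideanSpace ℝ (Fin d)) (hn : ‖n‖ = 1)
    (hplane : ∀ m, inner ℝ (ξ m - ξ 0) n = (0 : ℝ))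
    (ε : ℝ) (hε : 0 < ε)
    (φ : ℝ → ℝ) (hφ : ∀ r, φ r = Real.exp (-(r ^ 2) / ε ^ 2))
    (Φ : Matrix (Fin M) (Fin M) ℝ)
    (hΦ : ∀ i j, Φ i j = φ (dist (ξ i) (ξ j)))
    (hinv : IsUnit Φ)
    (f : Fin M → ℝ) (s : ℝ) (x : EuclideanSpace ℝ (Fin d))
    (hden : (∑ m, Φ⁻¹.mulVec (fun _ => (1 : ℝ)) m * φ (dist x (ξ m))) ≠ 0)
    (hden' : (∑ m, Φ⁻¹.mulVec (fun _ => (1 : ℝ)) m * φ (dist (x + s • n) (ξ m))) ≠ 0) :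
    (∑ m, Φ⁻¹.mulVec f m * φ (dist (x + s • n) (ξ m))) /
        (∑ m, Φ⁻¹.mulVec (fun _ => (1 : ℝ)) m * φ (dist (x + s • n) (ξ m))) =
      (∑ m, Φ⁻¹.mulVec f m * φ (dist x (ξ m))) /
        (∑ m, Φ⁻¹.mulVec (fun _ => (1 : ℝ)) m * φ (dist x (ξ m))) := by
  set c : ℝ := Real.exp (-(2 * s * inner ℝ (x - ξ 0) n + s ^ 2) / ε ^ 2) with hc
  have hcne : c ≠ 0 := Real.exp_ne_zero _
  have key : ∀ m, φ (dist (x + s • n) (ξ m)) = c * φ (dist x (ξ m)) := by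
    intro m
    have hinner : inner ℝ (x - ξ m) n = (inner ℝ (x - ξ 0) n : ℝ) := by
      have := hplane m
      have h : (inner ℝ (x - ξ m) n : ℝ) = inner ℝ (x - ξ 0) n - inner ℝ (ξ m - ξ 0) n := by
        rw [← inner_sub_left]; congr 1; abel
      rw [h, this, sub_zero]
    have hd2 : dist (x + s • n) (ξ m) ^ 2 =
        dist x (ξ m) ^ 2 + (2 * s * inner ℝ (x - ξ 0) n + s ^ 2) := by
      rw [dist_eq_norm, dist_eq_norm]
      have h1 : x + s • n - ξ m = (x - ξ m) + s • n := by abel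
      rw [h1, @norm_add_sq_real]
      rw [real_inner_smul_right, hinner, norm_smul, Real.norm_eq_abs, hn]
      rw [mul_one, sq_abs s]
      ring
    rw [hφ, hφ, hd2, hc, ← Real.exp_add]
    congr 1
    field_simp
    ring
  simp only [key]
  have hnum : (∑ m, Φ⁻¹.mulVec f m * (c * φ (dist x (ξ m)))) =
      c * ∑ m, Φ⁻¹.mulVec f m * φ (dist x (ξ m)) := by
    rw [Finset.mul_sum]; apply Finset.sum_congr rfl; intros; ring
  have hden2 : (∑ m, Φ⁻¹.mulVec (fun _ => (1 : ℝ)) m * (c * φ (dist x (ξ m)))) =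
      c * ∑ m, Φ⁻¹.mulVec (fun _ => (1 : ℝ)) m * φ (dist x (ξ m)) := by
    rw [Finset.mul_sum]; apply Finset.sum_congr rfl; intros; ring
  rw [hnum, hden2, mul_div_mul_left _ _ hcne]
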